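/- Let D ⊆ ℝ² be open and let X, Y : D → ℝ be C² functions with Y(u,v) ∈ (−π/2, π/2) for all (u,v) ∈ D. Define K = e^{2X}·cos Y and κ = e^{2X}·sin Y (so K > 0). Then the pair of equations (K² + κ²)^{1/4}·Δʰ ln (K² + κ²)^{1/8} = K and (K² + κ²)^{1/4}·Δʰ arctan(κ/K) = 2κ holds on D if and only if the pair of equations Δʰ X = 2e^{X}·cos Y and Δʰ Y = 2e^{X}·sin Y holds on D. -/

import Mathlib

/-- Partial derivative with respect to the first variable. -/
noncomputable def pd1 (f : ℝ × ℝ → ℝ) (p : ℝ × ℝ) : ℝ := fderiv ℝ f p (1, 0)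

/-- Partial derivative with respect to the second variable. -/
noncomputable def pd2 (f : ℝ × ℝ → ℝ) (p : ℝ × ℝ) : ℝ := fderiv ℝ f p (0, 1)

/-- The hyperbolic Laplace operator Δʰ = ∂²/∂u² − ∂²/∂v². -/
noncomputable def lapH (f : ℝ × ℝ → ℝ) (p : ℝ × ℝ) : ℝ := pd1 (pd1 f) p - pd2 (pd2 f) p

lemma fderiv_half (g : ℝ × ℝ → ℝ) (p : ℝ × ℝ) :
    fderiv ℝ (fun q => g q / 2) p = (2⁻¹ : ℝ) • fderiv ℝ g p := by
  by_cases h : DifferentiableAt ℝ g p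
  · have : (fun q => g q / 2) = fun q => (2⁻¹ : ℝ) • g q := by
      funext q; simp [div_eq_inv_mul, smul_eq_mul]
    rw [this, fderiv_fun_const_smul h]
  · have h2 : ¬ DifferentiableAt ℝ (fun q => g q / 2) p := by
      intro hc
      have := hc.fun_const_smul (2 : ℝ)
      have he : (fun q => (2 : ℝ) • (g q / 2)) = g := by funext q; simp [smul_eq_mul]; ring
      rw [he] at this; exact h this
    rw [fderiv_zero_of_not_differentiableAt h, fderiv_zero_of_not_differentiableAt h2]
    simp

lemma pd1_half (g : ℝ × ℝ → ℝ) (p : ℝ × ℝ) :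
    pd1 (fun q => g q / 2) p = pd1 g p / 2 := by
  unfold pd1; rw [fderiv_half]; simp; ring

lemma pd2_half (g : ℝ × ℝ → ℝ) (p : ℝ × ℝ) :
    pd2 (fun q => g q / 2) p = pd2 g p / 2 := by
  unfold pd2; rw [fderiv_half]; simp; ring

lemma lapH_half (g : ℝ × ℝ → ℝ) (p : ℝ × ℝ) :
    lapH (fun q => g q / 2) p = lapH g p / 2 := by
  unfold lapH
  have h1 : pd1 (fun q => g q / 2) = fun q => pd1 g q / 2 := funext fun q => pd1_half g q
  have h2 : pd2 (fun q => g q / 2) = fun q => pd2 g q / 2 := funext fun q => pd2_half g q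
  rw [h1, h2, pd1_half, pd2_half]; ring

lemma lapH_congr_nhds {f g : ℝ × ℝ → ℝ} {p : ℝ × ℝ} (h : f =ᶠ[nhds p] g) :
    lapH f p = lapH g p := by
  have hd : fderiv ℝ f =ᶠ[nhds p] fderiv ℝ g := h.fderiv
  have h1 : pd1 f =ᶠ[nhds p] pd1 g := hd.mono fun q hq => by simp [pd1, hq]
  have h2 : pd2 f =ᶠ[nhds p] pd2 g := hd.mono fun q hq => by simp [pd2, hq]
  simp [lapH, pd1, pd2, h1.fderiv_eq, h2.fderiv_eq]

theorem timelike_natural_system_iff_canonical_form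
    (D : Set (ℝ × ℝ)) (hD : IsOpen D)
    (X Y : ℝ × ℝ → ℝ)
    (hX : ContDiffOn ℝ 2 X D) (hY : ContDiffOn ℝ 2 Y D)
    (hYrange : ∀ p ∈ D, Y p ∈ Set.Ioo (-(Real.pi / 2)) (Real.pi / 2))
    (K κ : ℝ × ℝ → ℝ)
    (hK : ∀ p, K p = Real.exp (2 * X p) * Real.cos (Y p))
    (hκ : ∀ p, κ p = Real.exp (2 * X p) * Real.sin (Y p)) :
    ((∀ p ∈ D,
        (K p ^ 2 + κ p ^ 2) ^ ((1 : ℝ) / 4) *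
            lapH (fun q => Real.log ((K q ^ 2 + κ q ^ 2) ^ ((1 : ℝ) / 8))) p = K p) ∧
      (∀ p ∈ D,
        (K p ^ 2 + κ p ^ 2) ^ ((1 : ℝ) / 4) *
            lapH (fun q => Real.arctan (κ q / K q)) p = 2 * κ p)) ↔
    ((∀ p ∈ D, lapH X p = 2 * Real.exp (X p) * Real.cos (Y p)) ∧
      (∀ p ∈ D, lapH Y p = 2 * Real.exp (X p) * Real.sin (Y p))) := by
  -- basic algebraic identities
  have hsum : ∀ q, K q ^ 2 + κ q ^ 2 = Real.exp (4 * X q) := by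
    intro q
    rw [hK, hκ]
    have hpy : Real.cos (Y q) ^ 2 + Real.sin (Y q) ^ 2 = 1 := Real.cos_sq_add_sin_sq (Y q)
    have : Real.exp (4 * X q) = Real.exp (2 * X q) ^ 2 := by
      rw [← Real.exp_nat_mul]; ring_nf
    nlinarith [this]
  have hq4 : ∀ q, (K q ^ 2 + κ q ^ 2) ^ ((1 : ℝ) / 4) = Real.exp (X q) := by
    intro q
    rw [hsum, ← Real.exp_mul]; ring_nf
  have hq8 : ∀ q, Real.log ((K q ^ 2 + κ q ^ 2) ^ ((1 : ℝ) / 8)) = X q / 2 := by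
    intro q
    rw [hsum, ← Real.exp_mul, Real.log_exp]; ring
  have hexp2 : ∀ q, Real.exp (2 * X q) = Real.exp (X q) * Real.exp (X q) := by
    intro q; rw [← Real.exp_add]; ring_nf
  have hfun : (fun q => Real.log ((K q ^ 2 + κ q ^ 2) ^ ((1 : ℝ) / 8))) = fun q => X q / 2 :=
    funext hq8
  have key1 : ∀ p ∈ D,
      ((K p ^ 2 + κ p ^ 2) ^ ((1 : ℝ) / 4) *
          lapH (fun q => Real.log ((K q ^ 2 + κ q ^ 2) ^ ((1 : ℝ) / 8))) p = K p) ↔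
        lapH X p = 2 * Real.exp (X p) * Real.cos (Y p) := by
    intro p _
    rw [hfun, hq4, lapH_half, hK, hexp2]
    have he : Real.exp (X p) ≠ 0 := (Real.exp_pos _).ne'
    constructor
    · intro h
      have := mul_left_cancel₀ he (by linarith [h] : Real.exp (X p) * (lapH X p / 2)
        = Real.exp (X p) * (Real.exp (X p) * Real.cos (Y p)))
      linarith
    · intro h; rw [h]; ring
  have key2 : ∀ p ∈ D,
      ((K p ^ 2 + κ p ^ 2) ^ ((1 : ℝ) / 4) *
          lapH (fun q => Real.arctan (κ q / K q)) p = 2 * κ p) ↔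
        lapH Y p = 2 * Real.exp (X p) * Real.sin (Y p) := by
    intro p hp
    have hYc : ContinuousAt Y p :=
      (hY.contDiffAt (hD.mem_nhds hp)).continuousAt
    have hnb : ∀ᶠ q in nhds p, Y q ∈ Set.Ioo (-(Real.pi / 2)) (Real.pi / 2) :=
      hYc.preimage_mem_nhds (isOpen_Ioo.mem_nhds (hYrange p hp))
    have heq : (fun q => Real.arctan (κ q / K q)) =ᶠ[nhds p] Y := by
      refine hnb.mono fun q hq => ?_
      have hcos : 0 < Real.cos (Y q) := Real.cos_pos_of_mem_Ioo hq
      show Real.arctan (κ q / K q) = Y q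
      have : κ q / K q = Real.tan (Y q) := by
        rw [hK, hκ, Real.tan_eq_sin_div_cos]
        field_simp
      rw [this, Real.arctan_tan hq.1 hq.2]
    rw [lapH_congr_nhds heq, hq4, hκ, hexp2]
    have he : Real.exp (X p) ≠ 0 := (Real.exp_pos _).ne'
    constructor
    · intro h
      have := mul_left_cancel₀ he (by linarith [h] : Real.exp (X p) * lapH Y p
        = Real.exp (X p) * (2 * Real.exp (X p) * Real.sin (Y p)))
      linarith
    · intro h; rw [h]; ring
  constructor
  · rintro ⟨h1, h2⟩
    exact ⟨fun p hp => (key1 p hp).mp (h1 p hp), fun p hp => (key2 p hp).mp (h2 p hp)⟩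
  · rintro ⟨h1, h2⟩
    exact ⟨fun p hp => (key1 p hp).mpr (h1 p hp), fun p hp => (key2 p hp).mpr (h2 p hp)⟩
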